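/- Let 0 < r < 1 and let T be an invertible bounded operator in C_{1,r} on a complex Hilbert space H. Then there exists a unique pair of mutually orthogonal closed subspaces H₁, H₂ of H with H = H₁ ⊕ H₂, both reducing T, such that: (1) (1+r²)‖x‖² = ‖Tx‖² + r²‖T⁻*x‖² for all x ∈ H₁ (i.e. T restricted to H₁ is of class 𝒞_{1,r}); and (2) there is no nonzero closed subspace L of H₂ reducing T with (1+r²)‖x‖² = ‖Tx‖² + r²‖T⁻*x‖² for all x ∈ L. Moreover, H₁ is maximal: every closed subspace L of H reducing T on which (1+r²)‖x‖² = ‖Tx‖² + r²‖T⁻*x‖² holds for all x ∈ L is contained in H₁. -/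

import Mathlib

open ContinuousLinearMap

variable {H : Type*} [NormedAddCommGroup H] [InnerProductSpace ℂ H] [CompleteSpace H]

/-- `T ∈ C_{1,r}`: `T` is invertible, `‖T‖ ≤ 1` and `‖r • T⁻¹‖ ≤ 1`. -/
def MemC1r (r : ℝ) (T : H →L[ℂ] H) : Prop :=
  IsUnit T ∧ ‖T‖ ≤ 1 ∧ ‖(r : ℂ) • Ring.inverse T‖ ≤ 1

/-- A closed subspace `L` reduces `T` if `L` is invariant under both `T` and `T*`. -/
def Reduces (T : H →L[ℂ] H) (L : Submodule ℂ H) : Prop :=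
  ∀ x ∈ L, T x ∈ L ∧ adjoint T x ∈ L

/-- `T` restricted to `L` is of class `𝒞_{1,r}`:
`(1+r²)‖x‖² = ‖Tx‖² + r²‖T⁻*x‖²` for all `x ∈ L`. -/
def RestrictedScriptC1r (r : ℝ) (T : H →L[ℂ] H) (L : Submodule ℂ H) : Prop :=
  ∀ x ∈ L, (1 + r ^ 2) * ‖x‖ ^ 2 = ‖T x‖ ^ 2 + r ^ 2 * ‖adjoint (Ring.inverse T) x‖ ^ 2

/-- The canonical decomposition pair: `p.1, p.2` are mutually orthogonal closed subspaces
summing to `H`, both reducing `T`, with `T|_{p.1} ∈ 𝒞_{1,r}` and `T|_{p.2}` a completely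
non-unitary `C_{1,r}`-contraction. -/
def CanonPair (r : ℝ) (T : H →L[ℂ] H) (p : Submodule ℂ H × Submodule ℂ H) : Prop :=
  IsClosed (p.1 : Set H) ∧ IsClosed (p.2 : Set H) ∧
  (∀ x ∈ p.1, ∀ y ∈ p.2, (inner ℂ x y : ℂ) = 0) ∧ p.1 ⊔ p.2 = ⊤ ∧
  Reduces T p.1 ∧ Reduces T p.2 ∧
  RestrictedScriptC1r r T p.1 ∧
  ¬∃ L : Submodule ℂ H, L ≠ ⊥ ∧ IsClosed (L : Set H) ∧ L ≤ p.2 ∧ Reduces T L ∧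
    RestrictedScriptC1r r T L

/-- Words in `T` and `T*`. -/
noncomputable def wrd (T : H →L[ℂ] H) : List Bool → (H →L[ℂ] H)
  | [] => 1
  | b :: l => (if b then T else adjoint T) ∘L wrd T l

lemma wrd_append (T : H →L[ℂ] H) (w : List Bool) (b : Bool) (x : H) :
    wrd T (w ++ [b]) x = wrd T w ((if b then T else adjoint T) x) := by
  induction w with
  | nil => simp [wrd]
  | cons a l ih => simp [wrd, ih]

/-- The orthogonal complement of a reducing subspace is reducing. -/
lemma reduces_orth (T : H →L[ℂ] H) (L : Submodule ℂ H) (h : Reduces T L) : Reduces T Lᗮ := by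
  intro y hy
  rw [Submodule.mem_orthogonal] at hy
  constructor
  · rw [Submodule.mem_orthogonal]
    intro u hu
    have : (inner ℂ (adjoint T u) y : ℂ) = inner ℂ u (T y) := adjoint_inner_left T y u
    rw [← this]
    exact hy _ (h u hu).2
  · rw [Submodule.mem_orthogonal]
    intro u hu
    have : (inner ℂ u (adjoint T y) : ℂ) = inner ℂ (T u) y := adjoint_inner_right T u y
    rw [this]
    exact hy _ (h u hu).1

/-- A closed subspace invariant under an invertible operator `A` (with `Lᗮ` also
`A`-invariant) is invariant under the inverse of `A`. -/
lemma inv_invariant (A A' : H →L[ℂ] H) (hAA' : ∀ x, A (A' x) = x) (hA'A : ∀ x, A' (A x) = x)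
    (L : Submodule ℂ H) (hLc : IsClosed (L : Set H))
    (hAL : ∀ x ∈ L, A x ∈ L) (hAo : ∀ x ∈ Lᗮ, A x ∈ Lᗮ) :
    ∀ x ∈ L, A' x ∈ L := by
  intro x hx
  haveI := hLc.completeSpace_coe
  obtain ⟨a, ha, b, hb, hab⟩ := L.exists_add_mem_mem_orthogonal (A' x)
  have hAbo : A b ∈ Lᗮ := hAo b hb
  have hsum : A a + A b = x := by
    have h1 : A (A' x) = x := hAA' x
    rw [hab, map_add] at h1
    exact h1
  have hAbL : A b ∈ L := by
    have h2 : A b = x - A a := eq_sub_of_add_eq' hsum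
    rw [h2]
    exact L.sub_mem hx (hAL a ha)
  have hAb0 : A b = 0 := by
    have hmem : A b ∈ L ⊓ Lᗮ := Submodule.mem_inf.2 ⟨hAbL, hAbo⟩
    simpa using L.orthogonal_disjoint.le_bot hmem
  have hb0 : b = 0 := by
    have h3 := hA'A b
    rw [hAb0, map_zero] at h3
    exact h3.symm
  rw [hab, hb0, add_zero]
  exact ha

theorem stmt12 (r : ℝ) (hr0 : 0 < r) (hr1 : r < 1) (T : H →L[ℂ] H) (hT : IsUnit T)
    (hmem : MemC1r r T) :
    (∃! p : Submodule ℂ H × Submodule ℂ H, CanonPair r T p) ∧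
    ∀ p : Submodule ℂ H × Submodule ℂ H, CanonPair r T p →
      ∀ L : Submodule ℂ H, IsClosed (L : Set H) → Reduces T L →
        RestrictedScriptC1r r T L → L ≤ p.1 := by
  set S : H →L[ℂ] H := adjoint (Ring.inverse T) with hS
  -- the defect operator
  set D : H →L[ℂ] H := ((1 + r ^ 2 : ℝ) : ℂ) • (1 : H →L[ℂ] H) - adjoint T ∘L T -
      ((r ^ 2 : ℝ) : ℂ) • (Ring.inverse T ∘L S) with hD
  have hDx : ∀ x : H, D x = ((1 + r ^ 2 : ℝ) : ℂ) • x - adjoint T (T x) -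
      ((r ^ 2 : ℝ) : ℂ) • (Ring.inverse T (S x)) := by
    intro x
    rw [hD]
    simp [sub_apply, smul_apply, comp_apply, one_apply]
  have hDinner : ∀ x : H, (inner ℂ (D x) x : ℂ) =
      (((1 + r ^ 2) * ‖x‖ ^ 2 - ‖T x‖ ^ 2 - r ^ 2 * ‖S x‖ ^ 2 : ℝ) : ℂ) := by
    intro x
    rw [hDx x, inner_sub_left, inner_sub_left, inner_smul_left, inner_smul_left]
    have h1 : (inner ℂ (adjoint T (T x)) x : ℂ) = inner ℂ (T x) (T x) := adjoint_inner_left T x (T x)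
    have h2 : (inner ℂ (Ring.inverse T (S x)) x : ℂ) = inner ℂ (S x) (adjoint (Ring.inverse T) x) :=
      (adjoint_inner_right (Ring.inverse T) (S x) x).symm
    rw [h1, h2, ← hS, inner_self_eq_norm_sq_to_K, inner_self_eq_norm_sq_to_K,
      inner_self_eq_norm_sq_to_K]
    simp only [show ∀ x : ℝ, (RCLike.ofReal x : ℂ) = Complex.ofReal x from fun _ => rfl,
      Complex.conj_ofReal]
    push_cast
    ring
  -- pointwise consequences
  have condA : ∀ x : H, D x = 0 →
      (1 + r ^ 2) * ‖x‖ ^ 2 = ‖T x‖ ^ 2 + r ^ 2 * ‖S x‖ ^ 2 := by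
    intro x hx
    have h0 : (inner ℂ (D x) x : ℂ) = 0 := by rw [hx, inner_zero_left]
    rw [hDinner x] at h0
    have h1 : (1 + r ^ 2) * ‖x‖ ^ 2 - ‖T x‖ ^ 2 - r ^ 2 * ‖S x‖ ^ 2 = 0 :=
      Complex.ofReal_eq_zero.mp h0
    linarith
  have condB : ∀ x : H, (1 + r ^ 2) * ‖x‖ ^ 2 = ‖T x‖ ^ 2 + r ^ 2 * ‖S x‖ ^ 2 →
      (inner ℂ (D x) x : ℂ) = 0 := by
    intro x hx
    rw [hDinner x]
    have h1 : (1 + r ^ 2) * ‖x‖ ^ 2 - ‖T x‖ ^ 2 - r ^ 2 * ‖S x‖ ^ 2 = 0 := by linarith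
    rw [h1, Complex.ofReal_zero]
  -- inverse relations
  have hTT' : ∀ x : H, T (Ring.inverse T x) = x := by
    intro x
    have h : T * Ring.inverse T = 1 := Ring.mul_inverse_cancel T hT
    have := congrArg (fun f : H →L[ℂ] H => f x) h
    simpa [mul_apply, one_apply] using this
  have hT'T : ∀ x : H, Ring.inverse T (T x) = x := by
    intro x
    have h : Ring.inverse T * T = 1 := Ring.inverse_mul_cancel T hT
    have := congrArg (fun f : H →L[ℂ] H => f x) h
    simpa [mul_apply, one_apply] using this
  have hadj : ∀ A B : H →L[ℂ] H, A ∘L B = 1 → adjoint B ∘L adjoint A = 1 := by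
    intro A B h
    calc adjoint B ∘L adjoint A = adjoint (A ∘L B) := (adjoint_comp A B).symm
    _ = 1 := by
        rw [h, one_def, adjoint_id]
  have hcomp1 : Ring.inverse T ∘L T = 1 := by
    rw [← mul_def]; exact Ring.inverse_mul_cancel T hT
  have hcomp2 : T ∘L Ring.inverse T = 1 := by
    rw [← mul_def]; exact Ring.mul_inverse_cancel T hT
  have hTS : ∀ x : H, adjoint T (S x) = x := by
    intro x
    have := congrArg (fun f : H →L[ℂ] H => f x) (hadj _ _ hcomp1)
    simpa [comp_apply, one_apply, hS] using this
  have hST : ∀ x : H, S (adjoint T x) = x := by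
    intro x
    have := congrArg (fun f : H →L[ℂ] H => f x) (hadj _ _ hcomp2)
    simpa [comp_apply, one_apply, hS] using this
  -- the kernel of D
  set K : Submodule ℂ H := LinearMap.ker (D : H →ₗ[ℂ] H) with hK
  have hKclosed : IsClosed (K : Set H) := isClosed_ker D
  -- H₁ : the largest reducing subspace inside K
  set H₁ : Submodule ℂ H := ⨅ w : List Bool, K.comap (wrd T w : H →ₗ[ℂ] H) with hH1
  have mem_H1 : ∀ x : H, x ∈ H₁ ↔ ∀ w : List Bool, wrd T w x ∈ K := by
    intro x
    simp [hH1, Submodule.mem_iInf, Submodule.mem_comap]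
  have hH1closed : IsClosed (H₁ : Set H) := by
    have h : (H₁ : Set H) = ⋂ w : List Bool, (wrd T w) ⁻¹' (K : Set H) := by
      ext x
      simp [mem_H1 x, SetLike.mem_coe]
    rw [h]
    exact isClosed_iInter fun w => hKclosed.preimage (wrd T w).continuous
  have hH1red : Reduces T H₁ := by
    intro x hx
    rw [mem_H1] at hx
    constructor
    · rw [mem_H1]
      intro w
      have := hx (w ++ [true])
      rwa [wrd_append, if_pos rfl] at this
    · rw [mem_H1]
      intro w
      have := hx (w ++ [false])
      rwa [wrd_append, if_neg (by simp)] at this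
  have hH1K : H₁ ≤ K := by
    intro x hx
    have := (mem_H1 x).1 hx []
    simpa [wrd] using this
  have hH1res : RestrictedScriptC1r r T H₁ := fun x hx =>
    condA x (LinearMap.mem_ker.1 (hH1K hx))
  -- maximality
  have hmax : ∀ L : Submodule ℂ H, IsClosed (L : Set H) → Reduces T L →
      RestrictedScriptC1r r T L → L ≤ H₁ := by
    intro L hLc hred hres
    have hTL : ∀ x ∈ L, T x ∈ L := fun x hx => (hred x hx).1
    have hTsL : ∀ x ∈ L, adjoint T x ∈ L := fun x hx => (hred x hx).2
    have horth := reduces_orth T L hred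
    have hT'L : ∀ x ∈ L, Ring.inverse T x ∈ L :=
      inv_invariant T (Ring.inverse T) hTT' hT'T L hLc hTL (fun x hx => (horth x hx).1)
    have hSL : ∀ x ∈ L, S x ∈ L :=
      inv_invariant (adjoint T) S hTS hST L hLc hTsL (fun x hx => (horth x hx).2)
    have hDL : ∀ x ∈ L, D x ∈ L := by
      intro x hx
      rw [hDx x]
      exact Submodule.sub_mem _
        (Submodule.sub_mem _ (L.smul_mem _ hx) (hTsL _ (hTL _ hx)))
        (L.smul_mem _ (hT'L _ (hSL _ hx)))
    have hz : ∀ w ∈ L, (inner ℂ (D w) w : ℂ) = 0 := fun w hw => condB w (hres w hw)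
    have hpol : ∀ x ∈ L, ∀ y ∈ L, (inner ℂ (D y) x : ℂ) = 0 := by
      intro x hx y hy
      have hp := inner_map_polarization (D : H →ₗ[ℂ] H) x y
      simp only [ContinuousLinearMap.coe_coe] at hp
      rw [hp, hz _ (L.add_mem hx hy), hz _ (L.sub_mem hx hy),
        hz _ (L.add_mem hx (L.smul_mem _ hy)), hz _ (L.sub_mem hx (L.smul_mem _ hy))]
      simp
    have hker : ∀ x ∈ L, x ∈ K := by
      intro x hx
      have h0 : (inner ℂ (D x) (D x) : ℂ) = 0 := hpol (D x) (hDL x hx) x hx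
      exact LinearMap.mem_ker.2 (inner_self_eq_zero.1 h0)
    intro x hx
    rw [mem_H1]
    have hall : ∀ w : List Bool, wrd T w x ∈ L := by
      intro w
      induction w with
      | nil => simpa [wrd] using hx
      | cons b l ih =>
        cases b
        · simpa [wrd] using (hred _ ih).2
        · simpa [wrd] using (hred _ ih).1
    exact fun w => hker _ (hall w)
  haveI : CompleteSpace H₁ := hH1closed.completeSpace_coe
  -- the canonical pair
  have hcanon : CanonPair r T (H₁, H₁ᗮ) := by
    refine ⟨hH1closed, Submodule.isClosed_orthogonal _, ?_, ?_, hH1red,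
      reduces_orth T H₁ hH1red, hH1res, ?_⟩
    · intro x hx y hy
      exact (Submodule.mem_orthogonal _ _).1 hy x hx
    · exact Submodule.sup_orthogonal_of_hasOrthogonalProjection
    · rintro ⟨L, hLne, hLc, hLle, hLred, hLres⟩
      have h1 : L ≤ H₁ ⊓ H₁ᗮ := le_inf (hmax L hLc hLred hLres) hLle
      exact hLne (le_bot_iff.mp (le_trans h1 H₁.orthogonal_disjoint.le_bot))
  -- uniqueness
  have huniq : ∀ p : Submodule ℂ H × Submodule ℂ H, CanonPair r T p → p = (H₁, H₁ᗮ) := by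
    intro p hp
    obtain ⟨hp1c, hp2c, hporth, hpsup, hpred1, hpred2, hpres1, hpnone⟩ := hp
    have hp2le : p.2 ≤ p.1ᗮ := by
      intro y hy
      rw [Submodule.mem_orthogonal]
      exact fun u hu => hporth u hu y hy
    have hp2eq : p.2 = p.1ᗮ := by
      refine le_antisymm hp2le ?_
      intro z hz
      have hzsup : z ∈ p.1 ⊔ p.2 := hpsup ▸ Submodule.mem_top
      obtain ⟨a, ha, b, hb, hab⟩ := Submodule.mem_sup.1 hzsup
      have hb' : b ∈ p.1ᗮ := hp2le hb
      have ha' : a ∈ p.1ᗮ := by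
        have h4 : a = z - b := by rw [← hab]; abel
        rw [h4]
        exact Submodule.sub_mem _ hz hb'
      have ha0 : a = 0 := by
        have h5 : a ∈ p.1 ⊓ p.1ᗮ := Submodule.mem_inf.2 ⟨ha, ha'⟩
        simpa using p.1.orthogonal_disjoint.le_bot h5
      have h6 : z = b := by rw [← hab, ha0, zero_add]
      rw [h6]
      exact hb
    have hp1le : p.1 ≤ H₁ := hmax p.1 hp1c hpred1 hpres1
    have hMbot : H₁ ⊓ p.1ᗮ = ⊥ := by
      by_contra hM
      apply hpnone
      refine ⟨H₁ ⊓ p.1ᗮ, hM, ?_, ?_, ?_, ?_⟩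
      · exact IsClosed.inter hH1closed (p.1.isClosed_orthogonal)
      · rw [hp2eq]; exact inf_le_right
      · intro x hx
        rw [Submodule.mem_inf] at hx
        have h1 := hH1red x hx.1
        have h2 := reduces_orth T p.1 hpred1 x hx.2
        exact ⟨Submodule.mem_inf.2 ⟨h1.1, h2.1⟩, Submodule.mem_inf.2 ⟨h1.2, h2.2⟩⟩
      · intro x hx
        exact hH1res x (Submodule.mem_inf.1 hx).1
    have hH1le : H₁ ≤ p.1 := by
      intro x hx
      haveI : CompleteSpace p.1 := hp1c.completeSpace_coe
      obtain ⟨a, ha, b, hb, hxab⟩ := p.1.exists_add_mem_mem_orthogonal x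
      have hbH1 : b ∈ H₁ := by
        have h7 : b = x - a := by rw [hxab]; abel
        rw [h7]
        exact Submodule.sub_mem _ hx (hp1le ha)
      have hb0 : b = 0 := by
        have h8 : b ∈ H₁ ⊓ p.1ᗮ := Submodule.mem_inf.2 ⟨hbH1, hb⟩
        rw [hMbot] at h8
        simpa using h8
      rw [hxab, hb0, add_zero]
      exact ha
    have hp1eq : p.1 = H₁ := le_antisymm hp1le hH1le
    exact Prod.ext hp1eq (by rw [hp2eq, hp1eq])
  refine ⟨⟨(H₁, H₁ᗮ), hcanon, huniq⟩, ?_⟩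
  intro p hp L hLc hLred hLres
  rw [huniq p hp]
  exact hmax L hLc hLred hLres
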